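/- arXiv:1809.07772 — 2 statements merged into one kernel-verified Lean document; each statement's English description precedes it below -/
import Mathlib

section
/- If a bipartite density matrix ρ on ℂ^{d_A} ⊗ ℂ^{d_B} is separable, i.e., ρ = Σᵢ pᵢ ρᵢ^A ⊗ ρᵢ^B with pᵢ > 0 summing to 1 and ρᵢ^A, ρᵢ^B density matrices, then its partial transpose ρ^{T_B} is positive semidefinite, and hence the negativity N(ρ) = 0. -/
open Matrix
open scoped Kronecker ComplexOrder

/-- The partial transpose on the second tensor factor. -/
def ptB {dA dB : ℕ} (ρ : Matrix (Fin dA × Fin dB) (Fin dA × Fin dB) ℂ) :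
    Matrix (Fin dA × Fin dB) (Fin dA × Fin dB) ℂ :=
  Matrix.of fun p q => ρ (p.1, q.2) (q.1, p.2)

/-- The trace norm `‖X‖₁ = Tr √(X†X)` (real part of the trace). -/
noncomputable def traceNorm {α : Type*} [Fintype α] [DecidableEq α]
    (X : Matrix α α ℂ) : ℝ :=
  ((Matrix.posSemidef_conjTranspose_mul_self X).1.eigenvectorUnitary.1 *
      diagonal (((↑) : ℝ → ℂ) ∘ (√·) ∘ (Matrix.posSemidef_conjTranspose_mul_self X).1.eigenvalues) *
      (star (Matrix.posSemidef_conjTranspose_mul_self X).1.eigenvectorUnitary :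
        Matrix α α ℂ)).trace.re

/-- The negativity `N(ρ) = (‖ρ^{T_B}‖₁ − 1)/2`. -/
noncomputable def negativity {dA dB : ℕ}
    (ρ : Matrix (Fin dA × Fin dB) (Fin dA × Fin dB) ℂ) : ℝ :=
  (traceNorm (ptB ρ) - 1) / 2

lemma psd_smul {n : Type*} [Fintype n] {c : ℝ} (hc : 0 ≤ c)
    {M : Matrix n n ℂ} (hM : M.PosSemidef) : ((c : ℂ) • M).PosSemidef := by
  refine posSemidef_iff_dotProduct_mulVec.mpr ⟨?_, ?_⟩
  · unfold Matrix.IsHermitian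
    rw [conjTranspose_smul, hM.1]
    simp
  · intro x
    rw [smul_mulVec, dotProduct_smul, smul_eq_mul]
    exact mul_nonneg (by exact_mod_cast hc) (hM.dotProduct_mulVec_nonneg x)

lemma kron_conjTranspose {l m n p : Type*} (A : Matrix l m ℂ) (B : Matrix n p ℂ) :
    (A ⊗ₖ B)ᴴ = Aᴴ ⊗ₖ Bᴴ := by
  ext ⟨i, j⟩ ⟨k, l⟩
  simp [conjTranspose_apply, kroneckerMap_apply, mul_comm]

lemma psd_kron {m n : Type*} [Fintype m] [Fintype n] [DecidableEq m] [DecidableEq n]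
    {A : Matrix m m ℂ} {B : Matrix n n ℂ}
    (hA : A.PosSemidef) (hB : B.PosSemidef) : (A ⊗ₖ B).PosSemidef := by
  exact hA.kronecker hB

/-- If a bipartite density matrix `ρ` is separable,
`ρ = Σᵢ pᵢ ρᵢ^A ⊗ ρᵢ^B`, then its partial transpose is positive semidefinite
and its negativity vanishes. -/
theorem separable_ptB_posSemidef_negativity_zero (dA dB : ℕ)
    (ι : Type*) [Fintype ι] (p : ι → ℝ)
    (ρA : ι → Matrix (Fin dA) (Fin dA) ℂ)
    (ρB : ι → Matrix (Fin dB) (Fin dB) ℂ)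
    (hp : ∀ i, 0 < p i) (hsum : ∑ i, p i = 1)
    (hApsd : ∀ i, (ρA i).PosSemidef) (hAtr : ∀ i, (ρA i).trace = 1)
    (hBpsd : ∀ i, (ρB i).PosSemidef) (hBtr : ∀ i, (ρB i).trace = 1)
    (ρ : Matrix (Fin dA × Fin dB) (Fin dA × Fin dB) ℂ)
    (hsep : ρ = ∑ i, ((p i : ℂ)) • (ρA i ⊗ₖ ρB i)) :
    (ptB ρ).PosSemidef ∧ negativity ρ = 0 := by
  have hptB : ptB ρ = ∑ i, ((p i : ℂ)) • (ρA i ⊗ₖ (ρB i)ᵀ) := by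
    subst hsep
    ext ⟨a, b⟩ ⟨c, d⟩
    simp only [ptB, Matrix.of_apply, Matrix.sum_apply, Matrix.smul_apply, kroneckerMap_apply, transpose_apply, smul_eq_mul]
  have hpsd : (ptB ρ).PosSemidef := by
    rw [hptB]
    have h : ∀ i, ((p i : ℂ) • (ρA i ⊗ₖ (ρB i)ᵀ)).PosSemidef :=
      fun i => psd_smul (hp i).le (psd_kron (hApsd i) ((hBpsd i).transpose))
    refine posSemidef_iff_dotProduct_mulVec.mpr ⟨?_, ?_⟩
    · unfold Matrix.IsHermitian
      rw [conjTranspose_sum]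
      exact Finset.sum_congr rfl fun i _ => (h i).1
    · intro x
      have hmv : (∑ i, (p i : ℂ) • (ρA i ⊗ₖ (ρB i)ᵀ)) *ᵥ x
          = ∑ i, ((p i : ℂ) • (ρA i ⊗ₖ (ρB i)ᵀ)) *ᵥ x := by
        ext j
        simp only [Matrix.mulVec, dotProduct, Matrix.sum_apply, Finset.sum_apply,
          Finset.sum_mul]
        exact Finset.sum_comm
      have hd : star x ⬝ᵥ ∑ i, ((p i : ℂ) • (ρA i ⊗ₖ (ρB i)ᵀ)) *ᵥ x
          = ∑ i, star x ⬝ᵥ (((p i : ℂ) • (ρA i ⊗ₖ (ρB i)ᵀ)) *ᵥ x) := by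
        simp only [dotProduct, Finset.sum_apply, Finset.mul_sum]
        exact Finset.sum_comm
      rw [hmv, hd]
      exact Finset.sum_nonneg fun i _ => (h i).dotProduct_mulVec_nonneg x
  refine ⟨hpsd, ?_⟩
  have htr : (ptB ρ).trace = 1 := by
    rw [hptB]
    simp only [trace_sum, trace_smul, trace_kronecker, trace_transpose, hAtr, hBtr,
      mul_one, smul_eq_mul]
    rw [← Complex.ofReal_sum, hsum]
    simp
  have hsqrt : ((Matrix.posSemidef_conjTranspose_mul_self (ptB ρ)).1.eigenvectorUnitary.1 *
      diagonal (((↑) : ℝ → ℂ) ∘ (√·) ∘ (Matrix.posSemidef_conjTranspose_mul_self (ptB ρ)).1.eigenvalues) *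
      (star (Matrix.posSemidef_conjTranspose_mul_self (ptB ρ)).1.eigenvectorUnitary :
        Matrix (Fin dA × Fin dB) (Fin dA × Fin dB) ℂ)) = ptB ρ := by
    have hM := (Matrix.posSemidef_conjTranspose_mul_self (ptB ρ)).1
    have hsa : IsSelfAdjoint (ptB ρ) := hpsd.1
    have h1 : ((Matrix.posSemidef_conjTranspose_mul_self (ptB ρ)).1.eigenvectorUnitary.1 *
        diagonal (((↑) : ℝ → ℂ) ∘ (√·) ∘ (Matrix.posSemidef_conjTranspose_mul_self (ptB ρ)).1.eigenvalues) *
        (star (Matrix.posSemidef_conjTranspose_mul_self (ptB ρ)).1.eigenvectorUnitary :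
          Matrix (Fin dA × Fin dB) (Fin dA × Fin dB) ℂ)) = cfc Real.sqrt ((ptB ρ)ᴴ * ptB ρ) := by
      rw [hM.cfc_eq, IsHermitian.cfc, Unitary.conjStarAlgAut_apply]
      rfl
    have h2 : cfc (fun x : ℝ => x ^ 2) (ptB ρ) = (ptB ρ)ᴴ * ptB ρ := by
      rw [cfc_pow (fun x : ℝ => x) 2 (ptB ρ) (ha := hsa), cfc_id' ℝ (ptB ρ) hsa, pow_two, hpsd.1]
    rw [h1, ← h2, ← cfc_comp Real.sqrt (fun x : ℝ => x ^ 2) (ptB ρ) (ha := hsa)]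
    conv_rhs => rw [← cfc_id ℝ (ptB ρ) hsa]
    refine cfc_congr fun x hx => ?_
    obtain ⟨i, rfl⟩ := hpsd.1.spectrum_real_eq_range_eigenvalues ▸ hx
    exact Real.sqrt_sq (hpsd.eigenvalues_nonneg i)
  unfold negativity traceNorm
  rw [hsqrt, htr]
  norm_num
end

section
/- Let |ψ⟩ ∈ ℂ^{d_A} ⊗ ℂ^{d_B} be a unit vector with Schmidt rank r and σ = |ψ⟩⟨ψ|. Then the matrix rank of the partial transpose σ^{T_B} is r². Consequently, σ^{T_B} is invertible if and only if r = d_A = d_B. -/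
open Matrix

/-- A square complex matrix of full rank is a unit. -/
lemma isUnit_of_rank_eq_card {n : Type*} [Fintype n] [DecidableEq n]
    (M : Matrix n n ℂ) (h : M.rank = Fintype.card n) : IsUnit M := by
  have hsurj : Function.Surjective M.mulVecLin := by
    rw [← LinearMap.range_eq_top]
    apply Submodule.eq_top_of_finrank_eq
    rw [Module.finrank_fintype_fun_eq_card]
    exact h
  have hinj : Function.Injective M.mulVecLin :=
    (LinearMap.injective_iff_surjective).mpr hsurj
  have hcoe : ⇑(Matrix.toLinAlgEquiv' M) = ⇑(M.mulVecLin) := by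
    funext v
    simp [Matrix.toLinAlgEquiv'_apply, Matrix.mulVecLin_apply]
  have hu : IsUnit (Matrix.toLinAlgEquiv' M) := by
    rw [Module.End.isUnit_iff, hcoe]
    exact ⟨hinj, hsurj⟩
  have := hu.map (Matrix.toLinAlgEquiv'.symm :
    ((n → ℂ) →ₗ[ℂ] (n → ℂ)) ≃ₐ[ℂ] Matrix n n ℂ)
  simpa using this

/-- For a unit vector `ψ ∈ ℂ^{d_A} ⊗ ℂ^{d_B}` with Schmidt decomposition
`ψ = Σₖ √λₖ aₖ ⊗ bₖ` of Schmidt rank `r` and `σ = |ψ⟩⟨ψ|`, the matrix rank of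
the partial transpose `σ^{T_B}` is `r²`; consequently `σ^{T_B}` is invertible
iff `r = d_A = d_B`. -/
theorem schmidt_rank_ptB (dA dB r : ℕ) (c : Fin r → ℝ)
    (a : Fin r → Fin dA → ℂ) (b : Fin r → Fin dB → ℂ)
    (hc : ∀ k, 0 < c k) (hsum : ∑ k, c k = 1)
    (ha : ∀ k l, (∑ i, (starRingEnd ℂ) (a k i) * a l i) =
      if k = l then 1 else 0)
    (hb : ∀ k l, (∑ j, (starRingEnd ℂ) (b k j) * b l j) =
      if k = l then 1 else 0)
    (ψ : Fin dA × Fin dB → ℂ)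
    (hψ : ψ = fun q => ∑ k, (Real.sqrt (c k) : ℂ) * a k q.1 * b k q.2)
    (σ : Matrix (Fin dA × Fin dB) (Fin dA × Fin dB) ℂ)
    (hσ : σ = Matrix.of fun q q' => ψ q * (starRingEnd ℂ) (ψ q')) :
    (ptB σ).rank = r * r ∧ (IsUnit (ptB σ) ↔ (r = dA ∧ r = dB)) := by
  classical
  -- r is positive, since the Schmidt coefficients sum to 1
  have hr : 0 < r := by
    rcases Nat.eq_zero_or_pos r with h | h
    · subst h; simp at hsum
    · exact h
  -- the factorization ptB σ = A * B
  set A : Matrix (Fin dA × Fin dB) (Fin r × Fin r) ℂ :=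
    Matrix.of fun p kl => (Real.sqrt (c kl.1) : ℂ) * (Real.sqrt (c kl.2) : ℂ) *
      a kl.1 p.1 * (starRingEnd ℂ) (b kl.2 p.2) with hAdef
  set B : Matrix (Fin r × Fin r) (Fin dA × Fin dB) ℂ :=
    Matrix.of fun kl q => (starRingEnd ℂ) (a kl.2 q.1) * b kl.1 q.2 with hBdef
  have hAB : A * B = ptB σ := by
    ext p q
    rw [Matrix.mul_apply, Fintype.sum_prod_type]
    simp only [ptB, hσ, hψ, Matrix.of_apply, map_sum]
    rw [Finset.sum_mul_sum]
    apply Finset.sum_congr rfl; intro k _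
    apply Finset.sum_congr rfl; intro l _
    simp only [hAdef, hBdef, Matrix.of_apply, _root_.map_mul, Complex.conj_ofReal]
    ring
  -- the matrix C = B * A
  set C : Matrix (Fin r × Fin r) (Fin r × Fin r) ℂ :=
    Matrix.of fun kl kl' => (Real.sqrt (c kl'.1) : ℂ) * (Real.sqrt (c kl'.2) : ℂ) *
      ((if kl.2 = kl'.1 then (1 : ℂ) else 0) * (if kl'.2 = kl.1 then (1 : ℂ) else 0))
      with hCdef
  have hBA : B * A = C := by
    ext kl kl'
    obtain ⟨k, l⟩ := kl
    obtain ⟨k', l'⟩ := kl'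
    rw [Matrix.mul_apply, Fintype.sum_prod_type]
    have : (Real.sqrt (c k') : ℂ) * (Real.sqrt (c l') : ℂ) *
        ((∑ i, (starRingEnd ℂ) (a l i) * a k' i) *
          (∑ j, (starRingEnd ℂ) (b l' j) * b k j)) =
        ∑ i, ∑ j, B (k, l) (i, j) * A (i, j) (k', l') := by
      rw [Finset.sum_mul_sum, Finset.mul_sum]
      apply Finset.sum_congr rfl; intro i _
      rw [Finset.mul_sum]
      apply Finset.sum_congr rfl; intro j _
      simp only [hAdef, hBdef, Matrix.of_apply]
      ring
    rw [← this, ha, hb]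
    simp [hCdef]
  have hCC : C * C = Matrix.diagonal
      (fun kl : Fin r × Fin r => ((c kl.1 * c kl.2 : ℝ) : ℂ)) := by
    ext kl kl'
    obtain ⟨k, l⟩ := kl
    obtain ⟨m, n⟩ := kl'
    rw [Matrix.mul_apply]
    rw [Finset.sum_eq_single (l, k)]
    · simp only [hCdef, Matrix.of_apply, Matrix.diagonal_apply, Prod.ext_iff,
        if_pos rfl, and_self]
      by_cases hkm : k = m
      · by_cases hln : l = n
        · subst hkm; subst hln
          have e1 : (Real.sqrt (c k) : ℂ) * (Real.sqrt (c k) : ℂ) = (c k : ℂ) := by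
            rw [← Complex.ofReal_mul, Real.mul_self_sqrt (hc k).le]
          have e2 : (Real.sqrt (c l) : ℂ) * (Real.sqrt (c l) : ℂ) = (c l : ℂ) := by
            rw [← Complex.ofReal_mul, Real.mul_self_sqrt (hc l).le]
          simp only [if_pos rfl, and_self, and_true, true_and, if_true, mul_one,
            one_mul, Complex.ofReal_mul]
          linear_combination ((Real.sqrt (c l) : ℂ) * (Real.sqrt (c l) : ℂ)) * e1 +
            (c k : ℂ) * e2
        · rw [if_neg (show ¬(k = m ∧ l = n) from fun h => hln h.2),
            if_neg (show ¬(n = l) from fun h => hln h.symm)]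
          ring
      · simp [hkm, Prod.ext_iff]
    · rintro ⟨k', l'⟩ - hne
      by_cases h1 : l = k'
      · by_cases h2 : l' = k
        · exact absurd (by simp [h1, h2]) hne
        · simp [hCdef, h2]
      · simp [hCdef, h1]
    · intro h; exact absurd (Finset.mem_univ _) h
  -- the diagonal matrix is a unit
  have hdiagunit : IsUnit (Matrix.diagonal
      (fun kl : Fin r × Fin r => ((c kl.1 * c kl.2 : ℝ) : ℂ))) := by
    rw [Matrix.isUnit_diagonal]
    refine IsUnit.of_mul_eq_one (fun kl => (((c kl.1 * c kl.2 : ℝ) : ℂ))⁻¹) ?_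
    funext kl
    have : ((c kl.1 * c kl.2 : ℝ) : ℂ) ≠ 0 := by
      exact_mod_cast ne_of_gt (mul_pos (hc kl.1) (hc kl.2))
    have n1 : ((c kl.1 : ℝ) : ℂ) ≠ 0 := by exact_mod_cast ne_of_gt (hc kl.1)
    have n2 : ((c kl.2 : ℝ) : ℂ) ≠ 0 := by exact_mod_cast ne_of_gt (hc kl.2)
    simp only [Pi.mul_apply, Pi.one_apply, Complex.ofReal_mul, mul_inv]
    field_simp
  have hcard : Fintype.card (Fin r × Fin r) = r * r := by
    simp [Fintype.card_prod]
  -- rank computation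
  have hrank : (ptB σ).rank = r * r := by
    have hlow : r * r ≤ (ptB σ).rank := by
      have h1 : (C * C).rank = r * r := by
        rw [hCC, Matrix.rank_of_isUnit _ hdiagunit, hcard]
      have h2 : C * C = B * ((A * B) * A) := by
        rw [← hBA]; simp only [Matrix.mul_assoc]
      calc r * r = (C * C).rank := h1.symm
        _ = (B * ((A * B) * A)).rank := by rw [h2]
        _ ≤ ((A * B) * A).rank := Matrix.rank_mul_le_right _ _
        _ ≤ (A * B).rank := Matrix.rank_mul_le_left _ _
        _ = (ptB σ).rank := by rw [hAB]
    have hhigh : (ptB σ).rank ≤ r * r := by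
      calc (ptB σ).rank = (A * B).rank := by rw [hAB]
        _ ≤ A.rank := Matrix.rank_mul_le_left _ _
        _ ≤ Fintype.card (Fin r × Fin r) := Matrix.rank_le_card_width _
        _ = r * r := hcard
    exact le_antisymm hhigh hlow
  -- r ≤ dA from orthonormality of the a's
  have key : ∀ (d : ℕ) (v : Fin r → Fin d → ℂ),
      (∀ k l, (∑ i, (starRingEnd ℂ) (v k i) * v l i) = if k = l then 1 else 0) →
      r ≤ d := by
    intro d v hv
    set V : Matrix (Fin r) (Fin d) ℂ := Matrix.of fun k i => v k i with hVdef
    have hVV : V * Vᴴ = 1 := by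
      ext k l
      rw [Matrix.mul_apply]
      have : ∑ i, V k i * Vᴴ i l = (starRingEnd ℂ) (∑ i, (starRingEnd ℂ) (v k i) * v l i) := by
        rw [map_sum]
        apply Finset.sum_congr rfl; intro i _
        simp only [hVdef, Matrix.conjTranspose_apply, Matrix.of_apply,
          _root_.map_mul, Complex.conj_conj, starRingEnd_apply, star_star]
        try ring
      rw [this, hv k l]
      by_cases hkl : k = l <;> simp [hkl, Matrix.one_apply]
    calc r = Fintype.card (Fin r) := (Fintype.card_fin r).symm
      _ = (1 : Matrix (Fin r) (Fin r) ℂ).rank := Matrix.rank_one.symm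
      _ = (V * Vᴴ).rank := by rw [hVV]
      _ ≤ V.rank := Matrix.rank_mul_le_left _ _
      _ ≤ Fintype.card (Fin d) := Matrix.rank_le_card_width _
      _ = d := Fintype.card_fin d
  have hrdA : r ≤ dA := key dA a ha
  have hrdB : r ≤ dB := key dB b hb
  refine ⟨hrank, ?_, ?_⟩
  · intro h
    have hfull := Matrix.rank_of_isUnit _ h
    rw [hrank] at hfull
    have hcard' : Fintype.card (Fin dA × Fin dB) = dA * dB := by
      simp [Fintype.card_prod]
    rw [hcard'] at hfull
    -- r * r = dA * dB with r ≤ dA, r ≤ dB, 0 < r forces r = dA and r = dB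
    have hdB : 0 < dB := lt_of_lt_of_le hr hrdB
    have hdA : 0 < dA := lt_of_lt_of_le hr hrdA
    have h1 : r * dB ≤ dA * dB := Nat.mul_le_mul_right dB hrdA
    have h2 : r * r ≤ r * dB := Nat.mul_le_mul_left r hrdB
    have h3 : r * dB = dA * dB := le_antisymm h1 (by omega)
    have h4 : r = dA := Nat.eq_of_mul_eq_mul_right hdB h3
    have h5 : dA * r ≤ dA * dB := Nat.mul_le_mul_left dA hrdB
    have h6 : r * r ≤ dA * r := Nat.mul_le_mul_right r hrdA
    have h7 : dA * r = dA * dB := le_antisymm h5 (by omega)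
    have h8 : r = dB := Nat.eq_of_mul_eq_mul_left hdA h7
    exact ⟨h4, h8⟩
  · rintro ⟨h1, h2⟩
    apply isUnit_of_rank_eq_card
    rw [hrank]
    simp [Fintype.card_prod, ← h1, ← h2]
end
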